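/- arXiv:2303.13084 — 2 statements merged into one kernel-verified Lean document; each statement's English description precedes it below -/
import Mathlib

section
/- Let P ⊆ ℝ^d be a full-dimensional lattice polytope with codegree a satisfying P = ⌊aP⌋ + {P}. Then the remainder polytope {aP} = conv({x ∈ ℤ^d : n_F(x) ≥ −1 for all facets F of P}) of the dilate aP is a reflexive polytope. -/
open Set Pointwise

/-- The set of lattice points of `ℝ^d`. -/
def latticePoints (d : ℕ) : Set (Fin d → ℝ) :=
  {x | ∀ i, ∃ z : ℤ, x i = (z : ℝ)}

/-- A lattice polytope: the convex hull of a finite set of lattice points. -/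
def IsLatticePolytope {d : ℕ} (P : Set (Fin d → ℝ)) : Prop :=
  ∃ V : Finset (Fin d → ℝ), (V : Set (Fin d → ℝ)) ⊆ latticePoints d ∧
    P = convexHull ℝ (V : Set (Fin d → ℝ))

/-- The natural pairing of an integral linear functional with a point of `ℝ^d`. -/
def pairing {d : ℕ} (n : Fin d → ℤ) (x : Fin d → ℝ) : ℝ :=
  ∑ i, (n i : ℝ) * x i

/-- `P = {x | n_F(x) ≥ -h_F}` is an irredundant presentation with primitive
integral inner normals, i.e. the facet presentation of `P`. -/
def IsFacetPresentation {d m : ℕ} (P : Set (Fin d → ℝ))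
    (n : Fin m → Fin d → ℤ) (h : Fin m → ℤ) : Prop :=
  P = {x | ∀ i, pairing (n i) x ≥ -(h i : ℝ)} ∧
  (∀ i, Finset.univ.gcd (n i) = 1) ∧
  (∀ i, ∃ x : Fin d → ℝ, pairing (n i) x < -(h i : ℝ) ∧
    ∀ j, j ≠ i → pairing (n j) x ≥ -(h j : ℝ))

/-- `a` is the codegree of `P`: the least `k ≥ 1` such that `int(kP)` contains
a lattice point. -/
def IsCodegree {d : ℕ} (P : Set (Fin d → ℝ)) (a : ℕ) : Prop :=
  1 ≤ a ∧ (interior ((a : ℝ) • P) ∩ latticePoints d).Nonempty ∧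
    ∀ k : ℕ, 1 ≤ k → (interior ((k : ℝ) • P) ∩ latticePoints d).Nonempty → a ≤ k

/-- The floor polytope `⌊R⌋ = conv(int(R) ∩ ℤ^d)`. -/
def floorPoly {d : ℕ} (R : Set (Fin d → ℝ)) : Set (Fin d → ℝ) :=
  convexHull ℝ (interior R ∩ latticePoints d)

/-- The remainder polytope `{P} = conv{x ∈ ℤ^d | n_F(x) ≥ (a-1)h_F - 1}`,
defined in terms of the facet presentation data and the codegree `a`. -/
def remPoly {d m : ℕ} (n : Fin m → Fin d → ℤ) (h : Fin m → ℤ) (a : ℕ) :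
    Set (Fin d → ℝ) :=
  convexHull ℝ {x | x ∈ latticePoints d ∧
    ∀ i, pairing (n i) x ≥ ((a : ℝ) - 1) * (h i : ℝ) - 1}

/-- The cone `C_P ⊆ ℝ^d × ℝ` over `P`, in terms of the facet presentation. -/
def coneOver {d m : ℕ} (n : Fin m → Fin d → ℤ) (h : Fin m → ℤ) :
    Set ((Fin d → ℝ) × ℝ) :=
  {p | ∀ i, pairing (n i) p.1 ≥ -(p.2 * (h i : ℝ))}

/-- The interior `int(C_P)` of the cone over `P`. -/
def intCone {d m : ℕ} (n : Fin m → Fin d → ℤ) (h : Fin m → ℤ) :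
    Set ((Fin d → ℝ) × ℝ) :=
  {p | ∀ i, pairing (n i) p.1 > -(p.2 * (h i : ℝ))}

/-- The anticanonical set `ant(C_P)` of the cone over `P`. -/
def antCone {d m : ℕ} (n : Fin m → Fin d → ℤ) (h : Fin m → ℤ) :
    Set ((Fin d → ℝ) × ℝ) :=
  {p | ∀ i, pairing (n i) p.1 ≥ -(p.2 * (h i : ℝ)) - 1}

/-- Lattice points of `ℝ^d × ℝ = ℝ^{d+1}`. -/
def latticePairs (d : ℕ) : Set ((Fin d → ℝ) × ℝ) :=
  {p | p.1 ∈ latticePoints d ∧ ∃ z : ℤ, p.2 = (z : ℝ)}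

/-- The nearly Gorenstein condition with respect to a given facet presentation:
`(C_P ∩ ℤ^{d+1}) \ {0} ⊆ (int(C_P) ∩ ℤ^{d+1}) + (ant(C_P) ∩ ℤ^{d+1})`. -/
def NGIncl {d m : ℕ} (n : Fin m → Fin d → ℤ) (h : Fin m → ℤ) : Prop :=
  (coneOver n h ∩ latticePairs d) \ {(0 : (Fin d → ℝ) × ℝ)} ⊆
    (intCone n h ∩ latticePairs d) + (antCone n h ∩ latticePairs d)

/-- A full-dimensional lattice polytope is nearly Gorenstein if the nearly
Gorenstein inclusion holds for its facet presentation. -/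
def NearlyGorenstein {d : ℕ} (P : Set (Fin d → ℝ)) : Prop :=
  ∃ (m : ℕ) (n : Fin m → Fin d → ℤ) (h : Fin m → ℤ),
    IsFacetPresentation P n h ∧ NGIncl n h

/-- The polar dual `Q* = {y | y(x) ≥ -1 for all x ∈ Q}`. -/
def polarDual {d : ℕ} (Q : Set (Fin d → ℝ)) : Set (Fin d → ℝ) :=
  {y | ∀ x ∈ Q, (∑ i, y i * x i) ≥ -1}

/-- A reflexive polytope: a lattice polytope with `0` in its interior whose
polar dual is again a lattice polytope. -/
def IsReflexive {d : ℕ} (Q : Set (Fin d → ℝ)) : Prop :=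
  IsLatticePolytope Q ∧ (0 : Fin d → ℝ) ∈ interior Q ∧
    IsLatticePolytope (polarDual Q)

/-- A Gorenstein polytope: some dilate `kP`, translated by a lattice vector,
is reflexive. -/
def IsGorenstein {d : ℕ} (P : Set (Fin d → ℝ)) : Prop :=
  ∃ (k : ℕ) (w : Fin d → ℝ), 1 ≤ k ∧ w ∈ latticePoints d ∧
    IsReflexive ((fun x => x - w) '' ((k : ℝ) • P))

/-- The integer decomposition property. -/
def IsIDP {d : ℕ} (P : Set (Fin d → ℝ)) : Prop :=
  ∀ k : ℕ, 1 ≤ k → ∀ x ∈ ((k : ℝ) • P) ∩ latticePoints d,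
    ∃ y : Fin k → Fin d → ℝ, (∀ j, y j ∈ P ∩ latticePoints d) ∧ x = ∑ j, y j

/-- Minkowski indecomposability of a lattice polytope. -/
def IsIndecomposable {d : ℕ} (P : Set (Fin d → ℝ)) : Prop :=
  (¬ ∃ p : Fin d → ℝ, P = {p}) ∧
  ∀ P₁ P₂ : Set (Fin d → ℝ), IsLatticePolytope P₁ → IsLatticePolytope P₂ →
    P = P₁ + P₂ → (∃ p, P₁ = {p}) ∨ (∃ p, P₂ = {p})

/-- A `(0,1)`-polytope: the convex hull of a set of `(0,1)`-vectors. -/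
def Is01Polytope {d : ℕ} (P : Set (Fin d → ℝ)) : Prop :=
  ∃ V : Finset (Fin d → ℝ), (∀ v ∈ V, ∀ i, v i = 0 ∨ v i = 1) ∧
    P = convexHull ℝ (V : Set (Fin d → ℝ))

private lemma pairing_add {d : ℕ} (n : Fin d → ℤ) (x y : Fin d → ℝ) :
    pairing n (x + y) = pairing n x + pairing n y := by
  simp [pairing, mul_add, Finset.sum_add_distrib]

private lemma pairing_smul {d : ℕ} (n : Fin d → ℤ) (c : ℝ) (x : Fin d → ℝ) :
    pairing n (c • x) = c * pairing n x := by
  simp only [pairing, Finset.mul_sum, Pi.smul_apply, smul_eq_mul]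
  exact Finset.sum_congr rfl fun i _ => by ring

private lemma pairing_linear {d : ℕ} (n : Fin d → ℤ) : IsLinearMap ℝ (pairing n) :=
  ⟨pairing_add n, fun c x => pairing_smul n c x⟩

private lemma pairing_continuous {d : ℕ} (n : Fin d → ℤ) : Continuous (pairing n) := by
  unfold pairing
  exact continuous_finset_sum _ fun j _ => (continuous_const.mul (continuous_apply j))

private lemma pairing_int {d : ℕ} (n : Fin d → ℤ) {x : Fin d → ℝ}
    (hx : x ∈ latticePoints d) : ∃ M : ℤ, pairing n x = (M : ℝ) := by
  classical
  refine ⟨∑ i, n i * (hx i).choose, ?_⟩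
  unfold pairing
  push_cast
  exact Finset.sum_congr rfl fun i _ => by rw [← (hx i).choose_spec]

private lemma lattice_finite {d : ℕ} {s : Set (Fin d → ℝ)}
    (hsub : s ⊆ latticePoints d) (hb : Bornology.IsBounded s) : s.Finite := by
  classical
  obtain ⟨C, hC⟩ := isBounded_iff_forall_norm_le.mp hb
  have key : s ⊆ (fun z : Fin d → ℤ => fun i => (z i : ℝ)) ''
      {z : Fin d → ℤ | ∀ i, z i ∈ Set.Icc (-⌈C⌉) ⌈C⌉} := by
    intro x hx
    refine ⟨fun i => (hsub hx i).choose, fun i => ?_, ?_⟩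
    · have hzi : x i = (((hsub hx i).choose : ℤ) : ℝ) := (hsub hx i).choose_spec
      have h1 : |x i| ≤ C :=
        le_trans (by simpa [Real.norm_eq_abs] using norm_le_pi_norm x i) (hC x hx)
      have h2 : |(((hsub hx i).choose : ℤ) : ℝ)| ≤ (⌈C⌉ : ℝ) := by
        rw [← hzi]; exact h1.trans (Int.le_ceil C)
      rw [← Int.cast_abs] at h2
      have h3 : |(hsub hx i).choose| ≤ ⌈C⌉ := by exact_mod_cast h2
      exact Set.mem_Icc.mpr (abs_le.mp h3)
    · funext i; exact ((hsub hx i).choose_spec).symm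
  exact ((Set.Finite.pi' (fun i => Set.finite_Icc _ _)).image _).subset key

private lemma interior_strict {d : ℕ} {n : Fin d → ℤ} (hn : Finset.univ.gcd n = 1)
    {s : Set (Fin d → ℝ)} {c : ℝ} (hs : ∀ x ∈ s, pairing n x ≥ c)
    {y : Fin d → ℝ} (hy : y ∈ interior s) : pairing n y > c := by
  obtain ⟨ε, hε, hball⟩ := Metric.isOpen_iff.mp isOpen_interior y hy
  set w : Fin d → ℝ := fun j => (n j : ℝ) with hw
  have hww : pairing n w = ∑ j, ((n j : ℝ)) ^ 2 :=
    Finset.sum_congr rfl fun j _ => (sq ((n j : ℝ))).symm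
  have hwpos : 0 < ∑ j, ((n j : ℝ)) ^ 2 := by
    obtain ⟨j, hj⟩ : ∃ j, n j ≠ 0 := by
      by_contra hall
      push_neg at hall
      have : Finset.univ.gcd n = 0 := Finset.gcd_eq_zero_iff.mpr fun i _ => hall i
      rw [this] at hn; exact absurd hn (by norm_num)
    refine Finset.sum_pos' (fun i _ => sq_nonneg _) ⟨j, Finset.mem_univ j, ?_⟩
    have : (n j : ℝ) ≠ 0 := Int.cast_ne_zero.mpr hj
    positivity
  by_contra hle
  push_neg at hle
  have hyc : pairing n y = c := le_antisymm hle (hs y (interior_subset hy))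
  set δ := ε / (2 * (‖w‖ + 1)) with hδdef
  have hδ : 0 < δ := by positivity
  have hmem : y - δ • w ∈ s := by
    apply interior_subset
    apply hball
    rw [Metric.mem_ball, dist_eq_norm]
    have he : y - δ • w - y = -(δ • w) := by abel
    rw [he, norm_neg, norm_smul, Real.norm_eq_abs, abs_of_pos hδ]
    have h1 : 0 ≤ ‖w‖ := norm_nonneg w
    rw [hδdef]
    rw [div_mul_eq_mul_div]
    rw [div_lt_iff₀ (by positivity)]
    nlinarith
  have h2 := hs _ hmem
  have hps : pairing n (y - δ • w) = pairing n y - δ * pairing n w := by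
    have he : y - δ • w = y + (-δ) • w := by
      funext j; simp; ring
    rw [he, pairing_add, pairing_smul]; ring
  rw [hps, hyc, hww] at h2
  nlinarith
theorem stmt_10 {d : ℕ} (hd : 1 ≤ d) (P : Set (Fin d → ℝ))
    (hP : IsLatticePolytope P) (hfull : (interior P).Nonempty)
    {m : ℕ} (n : Fin m → Fin d → ℤ) (h : Fin m → ℤ)
    (hpres : IsFacetPresentation P n h)
    (a : ℕ) (ha : IsCodegree P a)
    (hdecomp : P = floorPoly ((a : ℝ) • P) + remPoly n h a) :
    IsReflexive
      (convexHull ℝ {x | x ∈ latticePoints d ∧ ∀ i, pairing (n i) x ≥ -1}) := by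
  classical
  obtain ⟨hPeq, hprim, -⟩ := hpres
  obtain ⟨ha1, hcod, -⟩ := ha
  have haR : (0:ℝ) < (a:ℝ) := by exact_mod_cast Nat.pos_of_ne_zero (by omega)
  have ha1R : (1:ℝ) ≤ (a:ℝ) := by exact_mod_cast ha1
  obtain ⟨V, hVlat, hVP⟩ := hP
  have hPcomp : IsCompact P := hVP ▸ V.finite_toSet.isCompact_convexHull (𝕜 := ℝ)
  have hPne : P.Nonempty := hfull.mono interior_subset
  -- membership in the dilate
  have haPmem : ∀ x : Fin d → ℝ,
      x ∈ (a:ℝ) • P ↔ ∀ i, pairing (n i) x ≥ -((a:ℝ) * (h i : ℝ)) := by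
    intro x
    constructor
    · rintro ⟨p, hp, rfl⟩ i
      rw [hPeq] at hp
      have hpi := hp i
      rw [pairing_smul]
      nlinarith [hpi]
    · intro hx
      refine ⟨(a:ℝ)⁻¹ • x, ?_, smul_inv_smul₀ (ne_of_gt haR) x⟩
      rw [hPeq]
      intro i
      rw [pairing_smul]
      have hxi := hx i
      have h2 := mul_le_mul_of_nonneg_left hxi (le_of_lt (inv_pos.mpr haR))
      have h3 : (a:ℝ)⁻¹ * -((a:ℝ) * (h i:ℝ)) = -(h i:ℝ) := by
        field_simp
      rw [ge_iff_le, ← h3]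
      exact h2
  -- floor polytope generator properties
  have hA_lat : (interior ((a:ℝ) • P) ∩ latticePoints d) ⊆ latticePoints d :=
    Set.inter_subset_right
  have hAprop : ∀ y ∈ interior ((a:ℝ) • P) ∩ latticePoints d,
      ∀ i, pairing (n i) y ≥ 1 - (a:ℝ) * (h i : ℝ) := by
    intro y hy i
    have hstrict : pairing (n i) y > -((a:ℝ) * (h i:ℝ)) :=
      interior_strict (hprim i) (fun x hx => (haPmem x).mp hx i) hy.1
    obtain ⟨M, hM⟩ := pairing_int (n i) hy.2
    rw [hM] at hstrict ⊢
    have h1 : ((-(a:ℤ) * h i : ℤ) : ℝ) < (M : ℝ) := by push_cast; linarith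
    have h2 : -(a:ℤ) * h i < M := by exact_mod_cast h1
    have h3 : -(a:ℤ) * h i + 1 ≤ M := Int.add_one_le_iff.mpr h2
    have h4 : ((-(a:ℤ) * h i + 1 : ℤ) : ℝ) ≤ (M : ℝ) := by exact_mod_cast h3
    push_cast at h4
    linarith
  have hFsub : ∀ i, floorPoly ((a:ℝ) • P) ⊆
      {x | 1 - (a:ℝ) * (h i:ℝ) ≤ pairing (n i) x} := fun i =>
    convexHull_min (fun y hy => hAprop y hy i) (convex_halfSpace_ge (pairing_linear (n i)) _)
  have hRsub : ∀ i, remPoly n h a ⊆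
      {x | ((a:ℝ) - 1) * (h i:ℝ) - 1 ≤ pairing (n i) x} := fun i =>
    convexHull_min (fun g hg => hg.2 i) (convex_halfSpace_ge (pairing_linear (n i)) _)
  -- nonemptiness
  have hAne : (interior ((a:ℝ) • P) ∩ latticePoints d).Nonempty := hcod
  have hFne : (floorPoly ((a:ℝ) • P)).Nonempty := hAne.mono (subset_convexHull ℝ _)
  have hRne : (remPoly n h a).Nonempty := by
    by_contra hre
    rw [Set.not_nonempty_iff_eq_empty] at hre
    rw [hre, Set.add_empty] at hdecomp
    exact hPne.ne_empty hdecomp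
  have hGne : {x | x ∈ latticePoints d ∧
      ∀ i, pairing (n i) x ≥ ((a : ℝ) - 1) * (h i : ℝ) - 1}.Nonempty := by
    by_contra hg
    rw [Set.not_nonempty_iff_eq_empty] at hg
    have : remPoly n h a = ∅ := by rw [remPoly, hg, convexHull_empty]
    exact hRne.ne_empty this
  -- finiteness
  have haPcomp : IsCompact ((a:ℝ) • P) := by
    have := hPcomp.image (continuous_const_smul (a:ℝ))
    rwa [Set.image_smul] at this
  have hAfin : (interior ((a:ℝ) • P) ∩ latticePoints d).Finite :=
    lattice_finite hA_lat (haPcomp.isBounded.subset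
      (fun x hx => interior_subset hx.1))
  obtain ⟨y₀, hy₀⟩ := hAne
  have hGfin : {x | x ∈ latticePoints d ∧
      ∀ i, pairing (n i) x ≥ ((a : ℝ) - 1) * (h i : ℝ) - 1}.Finite := by
    apply lattice_finite (fun x hx => hx.1)
    have himg : {x | x ∈ latticePoints d ∧
        ∀ i, pairing (n i) x ≥ ((a : ℝ) - 1) * (h i : ℝ) - 1} ⊆
        (fun t => t - y₀) '' P := by
      intro g hg
      refine ⟨g + y₀, ?_, add_sub_cancel_right g y₀⟩
      rw [hPeq]
      intro i
      have h1 := hg.2 i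
      have h2 := hAprop y₀ hy₀ i
      have h3 := pairing_add (n i) g y₀
      rw [ge_iff_le, h3]
      nlinarith
    exact ((hPcomp.image (continuous_id.sub continuous_const)).isBounded).subset himg
  -- the Minkowski generator set
  have hTsubS : ((((a:ℝ) - 1) • (interior ((a:ℝ) • P) ∩ latticePoints d)) +
      ((a:ℝ) • {x | x ∈ latticePoints d ∧
        ∀ i, pairing (n i) x ≥ ((a : ℝ) - 1) * (h i : ℝ) - 1}) : Set (Fin d → ℝ)) ⊆
      {x | x ∈ latticePoints d ∧ ∀ i, pairing (n i) x ≥ -1} := by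
    rintro x ⟨u, hu, v, hv, rfl⟩
    obtain ⟨y, hy, rfl⟩ := hu
    obtain ⟨g, hg, rfl⟩ := hv
    constructor
    · intro j
      obtain ⟨zy, hzy⟩ := (hA_lat hy) j
      obtain ⟨zg, hzg⟩ := hg.1 j
      refine ⟨((a:ℤ) - 1) * zy + (a:ℤ) * zg, ?_⟩
      show (((a:ℝ) - 1) • y + (a:ℝ) • g) j = _
      rw [Pi.add_apply, Pi.smul_apply, Pi.smul_apply, smul_eq_mul, smul_eq_mul, hzy, hzg]
      push_cast
      ring
    · intro i
      have he : pairing (n i) (((a:ℝ) - 1) • y + (a:ℝ) • g) =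
          ((a:ℝ)-1) * pairing (n i) y + (a:ℝ) * pairing (n i) g := by
        rw [pairing_add, pairing_smul, pairing_smul]
      rw [ge_iff_le, he]
      have h1 := hAprop y hy i
      have h2 := hg.2 i
      have ha0 : (0:ℝ) ≤ (a:ℝ) - 1 := by linarith
      nlinarith [mul_le_mul_of_nonneg_left h1 ha0,
        mul_le_mul_of_nonneg_left h2 (le_of_lt haR)]
  have hTfin : ((((a:ℝ) - 1) • (interior ((a:ℝ) • P) ∩ latticePoints d)) +
      ((a:ℝ) • {x | x ∈ latticePoints d ∧
        ∀ i, pairing (n i) x ≥ ((a : ℝ) - 1) * (h i : ℝ) - 1}) : Set (Fin d → ℝ)).Finite :=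
    (hAfin.smul_set).add (hGfin.smul_set)
  have hKT : convexHull ℝ ((((a:ℝ) - 1) • (interior ((a:ℝ) • P) ∩ latticePoints d)) +
      ((a:ℝ) • {x | x ∈ latticePoints d ∧
        ∀ i, pairing (n i) x ≥ ((a : ℝ) - 1) * (h i : ℝ) - 1})) =
      ((a:ℝ) - 1) • floorPoly ((a:ℝ) • P) + (a:ℝ) • remPoly n h a := by
    rw [convexHull_add, convexHull_smul, convexHull_smul]
    rfl
  -- separation: B ⊆ K
  have hBK : {x | ∀ i, pairing (n i) x ≥ -1} ⊆
      convexHull ℝ ((((a:ℝ) - 1) • (interior ((a:ℝ) • P) ∩ latticePoints d)) +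
      ((a:ℝ) • {x | x ∈ latticePoints d ∧
        ∀ i, pairing (n i) x ≥ ((a : ℝ) - 1) * (h i : ℝ) - 1})) := by
    intro x hx
    by_contra hxK
    obtain ⟨f, u, hfK, hfx⟩ := geometric_hahn_banach_closed_point
      (convex_convexHull ℝ _) ((hTfin.isCompact_convexHull (𝕜 := ℝ)).isClosed) hxK
    obtain ⟨z, hzF, hz⟩ := (hAfin.isCompact_convexHull (𝕜 := ℝ)).exists_isMaxOn hFne
      f.continuous.continuousOn
    obtain ⟨r, hrR, hr⟩ := (hGfin.isCompact_convexHull (𝕜 := ℝ)).exists_isMaxOn hRne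
      f.continuous.continuousOn
    have hpP : (a:ℝ)⁻¹ • (x + z) ∈ P := by
      rw [hPeq]
      intro i
      rw [pairing_smul, pairing_add]
      have h1 := hx i
      have h2 := hFsub i hzF
      have hT : -((a:ℝ) * (h i:ℝ)) ≤ pairing (n i) x + pairing (n i) z := by
        simp only [Set.mem_setOf_eq] at h1 h2; linarith
      have h4 := mul_le_mul_of_nonneg_left hT (le_of_lt (inv_pos.mpr haR))
      have h5 : (a:ℝ)⁻¹ * -((a:ℝ) * (h i:ℝ)) = -(h i:ℝ) := by
        field_simp
      rw [ge_iff_le, ← h5]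
      exact h4
    have hxz : x + z = (a:ℝ) • ((a:ℝ)⁻¹ • (x + z)) := (smul_inv_smul₀ (ne_of_gt haR) _).symm
    have hpFR : (a:ℝ)⁻¹ • (x + z) ∈ floorPoly ((a:ℝ) • P) + remPoly n h a := by
      rw [← hdecomp]; exact hpP
    obtain ⟨q, hq, r', hr', hp⟩ := Set.mem_add.mp hpFR
    have e1 : f x + f z = (a:ℝ) * (f q + f r') := by
      have e0 : f (x + z) = (a:ℝ) * f ((a:ℝ)⁻¹ • (x + z)) := by
        conv_lhs => rw [hxz]
        rw [map_smul, smul_eq_mul]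
      rw [map_add] at e0
      rw [e0, ← hp, map_add]
    have hq' : f q ≤ f z := isMaxOn_iff.mp hz q hq
    have hr'' : f r' ≤ f r := isMaxOn_iff.mp hr r' hr'
    have e2 : f x ≤ ((a:ℝ) - 1) * f z + (a:ℝ) * f r := by
      nlinarith [mul_le_mul_of_nonneg_left hq' (le_of_lt haR),
        mul_le_mul_of_nonneg_left hr'' (le_of_lt haR)]
    have hk : ((a:ℝ) - 1) • z + (a:ℝ) • r ∈
        convexHull ℝ ((((a:ℝ) - 1) • (interior ((a:ℝ) • P) ∩ latticePoints d)) +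
        ((a:ℝ) • {x | x ∈ latticePoints d ∧
          ∀ i, pairing (n i) x ≥ ((a : ℝ) - 1) * (h i : ℝ) - 1})) := by
      rw [hKT]
      exact Set.add_mem_add (smul_mem_smul_set hzF) (smul_mem_smul_set hrR)
    have hlt := hfK _ hk
    rw [map_add, map_smul, map_smul, smul_eq_mul, smul_eq_mul] at hlt
    linarith
  -- convexity of B
  have hBconv : Convex ℝ {x : Fin d → ℝ | ∀ i, pairing (n i) x ≥ -1} := by
    intro x hx y hy α β hα hβ hαβ
    intro i
    have e : pairing (n i) (α • x + β • y) =
        α * pairing (n i) x + β * pairing (n i) y := by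
      rw [pairing_add, pairing_smul, pairing_smul]
    rw [ge_iff_le, e]
    nlinarith [mul_le_mul_of_nonneg_left (hx i) hα, mul_le_mul_of_nonneg_left (hy i) hβ]
  have hQB : convexHull ℝ {x | x ∈ latticePoints d ∧ ∀ i, pairing (n i) x ≥ -1} ⊆
      {x | ∀ i, pairing (n i) x ≥ -1} :=
    convexHull_min (fun x hx => hx.2) hBconv
  have hKQ : convexHull ℝ ((((a:ℝ) - 1) • (interior ((a:ℝ) • P) ∩ latticePoints d)) +
      ((a:ℝ) • {x | x ∈ latticePoints d ∧
        ∀ i, pairing (n i) x ≥ ((a : ℝ) - 1) * (h i : ℝ) - 1})) ⊆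
      convexHull ℝ {x | x ∈ latticePoints d ∧ ∀ i, pairing (n i) x ≥ -1} :=
    convexHull_mono hTsubS
  have hQeqB : convexHull ℝ {x | x ∈ latticePoints d ∧ ∀ i, pairing (n i) x ≥ -1} =
      {x | ∀ i, pairing (n i) x ≥ -1} :=
    Set.Subset.antisymm hQB (hBK.trans hKQ)
  have hQeqK : convexHull ℝ {x | x ∈ latticePoints d ∧ ∀ i, pairing (n i) x ≥ -1} =
      convexHull ℝ ((((a:ℝ) - 1) • (interior ((a:ℝ) • P) ∩ latticePoints d)) +
      ((a:ℝ) • {x | x ∈ latticePoints d ∧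
        ∀ i, pairing (n i) x ≥ ((a : ℝ) - 1) * (h i : ℝ) - 1})) :=
    Set.Subset.antisymm (hQB.trans hBK) hKQ
  refine ⟨⟨hTfin.toFinset, ?_, ?_⟩, ?_, ?_⟩
  · intro v hv
    rw [Set.Finite.coe_toFinset] at hv
    exact (hTsubS hv).1
  · rw [Set.Finite.coe_toFinset]
    exact hQeqK
  · rw [hQeqB]
    apply mem_interior.mpr
    refine ⟨⋂ i, {x | pairing (n i) x > -1}, ?_, ?_, ?_⟩
    · intro x hx i
      exact le_of_lt (Set.mem_iInter.mp hx i)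
    · exact isOpen_iInter_of_finite fun i =>
        isOpen_lt continuous_const (pairing_continuous (n i))
    · refine Set.mem_iInter.mpr fun i => ?_
      show pairing (n i) 0 > -1
      have : pairing (n i) (0 : Fin d → ℝ) = 0 := by simp [pairing]
      rw [this]; norm_num
  · rw [hQeqB]
    refine ⟨insert 0 (Finset.image (fun i => fun j => ((n i j : ℤ) : ℝ)) Finset.univ), ?_, ?_⟩
    · intro v hv
      simp only [Finset.coe_insert, Set.mem_insert_iff, Finset.coe_image,
        Set.mem_image, Finset.mem_coe, Finset.mem_univ, true_and] at hv
      rcases hv with rfl | ⟨i, -, rfl⟩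
      · intro j; exact ⟨0, by simp⟩
      · intro j; exact ⟨n i j, rfl⟩
    · apply Set.Subset.antisymm
      · -- polarDual B ⊆ conv VD
        intro y hy
        by_contra hyD
        obtain ⟨f, u, hfD, hfy⟩ := geometric_hahn_banach_closed_point
          (convex_convexHull ℝ _)
          (((Finset.finite_toSet _).isCompact_convexHull (𝕜 := ℝ)).isClosed) hyD
        have hu : 0 < u := by
          have h0 := hfD 0 (subset_convexHull ℝ _ (by simp))
          simpa using h0
        have hexp : ∀ v : Fin d → ℝ,
            f v = ∑ j, v j * f (fun k => if j = k then 1 else 0) := by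
          intro v
          have := LinearMap.pi_apply_eq_sum_univ (f : (Fin d → ℝ) →ₗ[ℝ] ℝ) v
          simpa [smul_eq_mul] using this
        have hfval : ∀ v : Fin d → ℝ,
            (∑ j, v j * (-(f (fun k => if j = k then 1 else 0)) / u)) = -(f v) / u := by
          intro v
          have hterm : ∀ j ∈ Finset.univ,
              v j * (-(f (fun k => if j = k then 1 else 0)) / u)
              = -(v j * f (fun k => if j = k then 1 else 0)) / u := fun j _ => by ring
          rw [Finset.sum_congr rfl hterm, ← Finset.sum_div, Finset.sum_neg_distrib, hexp v]
        set xstar : Fin d → ℝ := fun j => -(f (fun k => if j = k then 1 else 0)) / u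
          with hxs
        have hxB : xstar ∈ {x : Fin d → ℝ | ∀ i, pairing (n i) x ≥ -1} := by
          intro i
          have h1 : pairing (n i) xstar = -(f (fun j => ((n i j : ℤ) : ℝ))) / u :=
            hfval (fun j => ((n i j : ℤ) : ℝ))
          have h2 : f (fun j => ((n i j : ℤ) : ℝ)) < u := by
            apply hfD
            apply subset_convexHull ℝ _
            simp only [Finset.coe_insert, Set.mem_insert_iff, Finset.coe_image,
              Set.mem_image, Finset.mem_coe, Finset.mem_univ, true_and]
            exact Or.inr ⟨i, rfl⟩
          rw [ge_iff_le, h1, le_div_iff₀ hu]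
          linarith
        have h3 := hy xstar hxB
        rw [hfval y, ge_iff_le, le_div_iff₀ hu] at h3
        linarith
      · apply convexHull_min
        · intro v hv x hxB
          simp only [Finset.coe_insert, Set.mem_insert_iff, Finset.coe_image,
            Set.mem_image, Finset.mem_coe, Finset.mem_univ, true_and] at hv
          rcases hv with rfl | ⟨i, -, rfl⟩
          · simp
          · exact hxB i
        · intro y₁ h₁ y₂ h₂ α β hα hβ hαβ x hx
          have e : (∑ i, (α • y₁ + β • y₂) i * x i) =
              α * (∑ i, y₁ i * x i) + β * (∑ i, y₂ i * x i) := by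
            rw [Finset.mul_sum, Finset.mul_sum, ← Finset.sum_add_distrib]
            refine Finset.sum_congr rfl fun i _ => ?_
            have : (α • y₁ + β • y₂) i = α * y₁ i + β * y₂ i := rfl
            rw [this]; ring
          rw [ge_iff_le, e]
          nlinarith [mul_le_mul_of_nonneg_left (h₁ x hx) hα,
            mul_le_mul_of_nonneg_left (h₂ x hx) hβ]
end

section
/- Let P ⊆ ℝ^d be a full-dimensional, Minkowski indecomposable lattice polytope. Then P is nearly Gorenstein if and only if P is Gorenstein. -/
open Set Pointwise

namespace Stmt14Aux
variable {d : ℕ}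
def dotP (y x : Fin d → ℝ) : ℝ := ∑ i, y i * x i
lemma dotP_comm (y x : Fin d → ℝ) : dotP y x = dotP x y := Finset.sum_congr rfl fun i _ => mul_comm _ _
lemma dotP_add (y x z : Fin d → ℝ) : dotP y (x + z) = dotP y x + dotP y z := by
  unfold dotP; rw [← Finset.sum_add_distrib]; exact Finset.sum_congr rfl fun i _ => by simp [mul_add]
lemma dotP_smul (y : Fin d → ℝ) (c : ℝ) (x : Fin d → ℝ) : dotP y (c • x) = c * dotP y x := by
  unfold dotP; rw [Finset.mul_sum]; exact Finset.sum_congr rfl fun i _ => by simp; ring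
lemma dotP_smul_left (c : ℝ) (g x : Fin d → ℝ) : dotP (c • g) x = c * dotP g x := by
  rw [dotP_comm, dotP_smul, dotP_comm]
lemma dotP_sub (y x z : Fin d → ℝ) : dotP y (x - z) = dotP y x - dotP y z := by
  unfold dotP; rw [← Finset.sum_sub_distrib]; exact Finset.sum_congr rfl fun i _ => by simp [mul_sub]
lemma dotP_zero_left (x : Fin d → ℝ) : dotP 0 x = 0 := by simp [dotP]
lemma dotP_self_pos {v : Fin d → ℝ} (hv : v ≠ 0) : 0 < dotP v v := by
  have h1 : ∃ i, v i ≠ 0 := by by_contra h; push_neg at h; exact hv (funext h)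
  obtain ⟨i, hi⟩ := h1
  exact Finset.sum_pos' (fun j _ => mul_self_nonneg _) ⟨i, Finset.mem_univ i, mul_self_pos.2 hi⟩
lemma isLinearMap_dotP (y : Fin d → ℝ) : IsLinearMap ℝ (dotP y) := ⟨dotP_add y, fun c x => dotP_smul y c x⟩
lemma hull_halfspace {S : Set (Fin d → ℝ)} (y : Fin d → ℝ) {c : ℝ}
    (hS : ∀ u ∈ S, c ≤ dotP y u) : ∀ x ∈ convexHull ℝ S, c ≤ dotP y x := by
  have hconv : Convex ℝ {x : Fin d → ℝ | c ≤ dotP y x} := convex_halfSpace_ge (isLinearMap_dotP y) c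
  exact fun x hx => convexHull_min hS hconv hx
lemma hull_min (V : Finset (Fin d → ℝ)) (hne : V.Nonempty) (y : Fin d → ℝ) :
    ∀ x ∈ convexHull ℝ (V : Set (Fin d → ℝ)), V.inf' hne (fun u => dotP y u) ≤ dotP y x :=
  hull_halfspace y fun u hu => Finset.inf'_le _ hu
lemma lat_sub {x w : Fin d → ℝ} (hx : x ∈ latticePoints d) (hw : w ∈ latticePoints d) :
    x - w ∈ latticePoints d := fun i => by
  obtain ⟨a, ha⟩ := hx i; obtain ⟨b, hb⟩ := hw i; exact ⟨a - b, by simp [ha, hb]⟩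
noncomputable def intRep (x : Fin d → ℝ) : Fin d → ℤ := fun i => ⌊x i⌋
lemma intRep_cast {x : Fin d → ℝ} (hx : x ∈ latticePoints d) (i : Fin d) :
    ((intRep x i : ℤ) : ℝ) = x i := by obtain ⟨z, hz⟩ := hx i; simp [intRep, hz]
lemma pairing_intRep {v : Fin d → ℝ} (hv : v ∈ latticePoints d) (x : Fin d → ℝ) :
    pairing (intRep v) x = dotP v x := Finset.sum_congr rfl fun i _ => by rw [intRep_cast hv i]
noncomputable def idot (a b : Fin d → ℝ) : ℤ := ∑ i, intRep a i * intRep b i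
lemma dotP_eq_idot {a b : Fin d → ℝ} (ha : a ∈ latticePoints d)
    (hb : b ∈ latticePoints d) : dotP a b = ((idot a b : ℤ) : ℝ) := by
  unfold dotP idot; push_cast
  exact Finset.sum_congr rfl fun i _ => by rw [intRep_cast ha, intRep_cast hb]
lemma clm_repr (f : (Fin d → ℝ) →L[ℝ] ℝ) : ∃ g : Fin d → ℝ, ∀ x, f x = dotP g x := by
  refine ⟨fun i => f (fun j => if i = j then 1 else 0), fun x => ?_⟩
  have hx := pi_eq_sum_univ x
  calc f x = f (∑ i, x i • fun j => if i = j then (1:ℝ) else 0) := by rw [← hx]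
    _ = ∑ i, x i • f (fun j => if i = j then (1:ℝ) else 0) := by
        rw [map_sum]; exact Finset.sum_congr rfl fun i _ => f.map_smul _ _
    _ = dotP (fun i => f (fun j => if i = j then 1 else 0)) x := by
        unfold dotP; exact Finset.sum_congr rfl fun i _ => by rw [smul_eq_mul]; ring
lemma mem_of_dual {Q : Set (Fin d → ℝ)} (hconv : Convex ℝ Q) (hcl : IsClosed Q)
    (h0 : (0 : Fin d → ℝ) ∈ Q) (V' : Finset (Fin d → ℝ))
    (hdual : polarDual Q = convexHull ℝ (V' : Set (Fin d → ℝ)))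
    {z : Fin d → ℝ} (hz : ∀ v ∈ V', -1 ≤ dotP v z) : z ∈ Q := by
  by_contra hzQ
  obtain ⟨f, u, hfQ, hfz⟩ := geometric_hahn_banach_closed_point hconv hcl hzQ
  obtain ⟨g, hg⟩ := clm_repr f
  have hu0 : 0 < u := by have h := hfQ 0 h0; rwa [map_zero] at h
  set y : Fin d → ℝ := (-(1/u)) • g with hydef
  have hymem : y ∈ polarDual Q := by
    intro x hx
    show -1 ≤ ∑ i, y i * x i
    have h1 : dotP y x = -(1/u) * dotP g x := dotP_smul_left _ _ _
    have h2 : dotP g x < u := by rw [← hg]; exact hfQ x hx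
    have h3 : -(1/u) * dotP g x ≥ -1 := by
      rw [neg_mul, ge_iff_le, neg_le_neg_iff, div_mul_eq_mul_div, div_le_one hu0, one_mul]
      exact le_of_lt h2
    calc (-1 : ℝ) ≤ -(1/u) * dotP g x := h3
      _ = ∑ i, y i * x i := h1.symm
  rw [hdual] at hymem
  have hbound : -1 ≤ dotP y z := by
    have := hull_halfspace (S := (V' : Set (Fin d → ℝ))) z
      (c := -1) (fun v hv => by rw [← dotP_comm]; exact hz v hv) y hymem
    rwa [dotP_comm]
  have hyz : dotP y z < -1 := by
    have h1 : dotP y z = -(1/u) * dotP g z := dotP_smul_left _ _ _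
    have h2 : u < dotP g z := by rw [← hg]; exact hfz
    rw [h1, neg_mul, neg_lt_neg_iff, div_mul_eq_mul_div, lt_div_iff₀ hu0]
    nlinarith
  linarith

-- extra aux lemmas (to be appended inside namespace Stmt14Aux, after part1 lemmas)
lemma dotP_zero_right (y : Fin d → ℝ) : dotP y 0 = 0 := by simp [dotP]

lemma dotP_neg (y x : Fin d → ℝ) : dotP y (-x) = -dotP y x := by
  have := dotP_sub y 0 x
  simpa [dotP_zero_right] using this

lemma hull_halfspace_le {S : Set (Fin d → ℝ)} (y : Fin d → ℝ) {c : ℝ}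
    (hS : ∀ u ∈ S, dotP y u ≤ c) : ∀ x ∈ convexHull ℝ S, dotP y x ≤ c := by
  have hconv : Convex ℝ {x : Fin d → ℝ | dotP y x ≤ c} :=
    convex_halfSpace_le (isLinearMap_dotP y) c
  exact fun x hx => convexHull_min hS hconv hx

lemma pairing_eq_dotP (nv : Fin d → ℤ) (x : Fin d → ℝ) :
    pairing nv x = dotP (fun i => ((nv i : ℤ) : ℝ)) x := rfl

lemma pairing_add (nv : Fin d → ℤ) (x y : Fin d → ℝ) :
    pairing nv (x + y) = pairing nv x + pairing nv y := by
  rw [pairing_eq_dotP nv, pairing_eq_dotP nv, pairing_eq_dotP nv,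
    dotP_add]

lemma pairing_smul (nv : Fin d → ℤ) (c : ℝ) (x : Fin d → ℝ) :
    pairing nv (c • x) = c * pairing nv x := by
  rw [pairing_eq_dotP nv, pairing_eq_dotP nv, dotP_smul]

lemma pairing_sub (nv : Fin d → ℤ) (x y : Fin d → ℝ) :
    pairing nv (x - y) = pairing nv x - pairing nv y := by
  rw [pairing_eq_dotP nv, pairing_eq_dotP nv, pairing_eq_dotP nv,
    dotP_sub]

lemma pairing_neg (nv : Fin d → ℤ) (x : Fin d → ℝ) :
    pairing nv (-x) = -pairing nv x := by
  rw [pairing_eq_dotP nv, pairing_eq_dotP nv, dotP_neg]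

lemma pairing_zero (nv : Fin d → ℤ) : pairing nv (0 : Fin d → ℝ) = 0 := by
  rw [pairing_eq_dotP nv, dotP_zero_right]

lemma pairing_int {x : Fin d → ℝ} (hx : x ∈ latticePoints d) (nv : Fin d → ℤ) :
    ∃ zz : ℤ, pairing nv x = (zz : ℝ) := by
  refine ⟨∑ i, nv i * intRep x i, ?_⟩
  unfold pairing
  push_cast
  exact Finset.sum_congr rfl fun i _ => by rw [intRep_cast hx]

lemma lat_add {x w : Fin d → ℝ} (hx : x ∈ latticePoints d) (hw : w ∈ latticePoints d) :
    x + w ∈ latticePoints d := fun i => by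
  obtain ⟨a, ha⟩ := hx i; obtain ⟨b, hb⟩ := hw i; exact ⟨a + b, by simp [ha, hb]⟩

lemma lat_neg {x : Fin d → ℝ} (hx : x ∈ latticePoints d) : -x ∈ latticePoints d := fun i => by
  obtain ⟨a, ha⟩ := hx i; exact ⟨-a, by simp [ha]⟩

lemma lat_zsmul (t : ℤ) {x : Fin d → ℝ} (hx : x ∈ latticePoints d) :
    ((t : ℝ)) • x ∈ latticePoints d := fun i => by
  obtain ⟨a, ha⟩ := hx i; exact ⟨t * a, by simp [ha]⟩

lemma lat_nvec (nv : Fin d → ℤ) : (fun i => ((nv i : ℤ) : ℝ)) ∈ latticePoints d :=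
  fun i => ⟨nv i, rfl⟩

lemma polarDual_convex (Q : Set (Fin d → ℝ)) : Convex ℝ (polarDual Q) := by
  intro y1 hy1 y2 hy2 a b ha hb hab
  intro x hx
  show -1 ≤ ∑ i, (a • y1 + b • y2) i * x i
  have h1 : dotP (a • y1 + b • y2) x = a * dotP y1 x + b * dotP y2 x := by
    rw [dotP_comm, dotP_add, dotP_smul, dotP_smul, dotP_comm x y1, dotP_comm x y2]
  have h2 : -1 ≤ dotP y1 x := hy1 x hx
  have h3 : -1 ≤ dotP y2 x := hy2 x hx
  have h4 : a * (-1 : ℝ) ≤ a * dotP y1 x := mul_le_mul_of_nonneg_left h2 ha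
  have h5 : b * (-1 : ℝ) ≤ b * dotP y2 x := mul_le_mul_of_nonneg_left h3 hb
  calc (-1 : ℝ) = a * (-1) + b * (-1) := by rw [← add_mul, hab]; ring
    _ ≤ a * dotP y1 x + b * dotP y2 x := add_le_add h4 h5
    _ = ∑ i, (a • y1 + b • y2) i * x i := h1.symm

lemma hull_norm_bound (V : Finset (Fin d → ℝ)) (hne : V.Nonempty) :
    ∀ x ∈ convexHull ℝ (V : Set (Fin d → ℝ)), ‖x‖ ≤ V.sup' hne (fun v => ‖v‖) := by
  set R := V.sup' hne (fun v => ‖v‖) with hR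
  have hsub : (V : Set (Fin d → ℝ)) ⊆ Metric.closedBall 0 R := by
    intro v hv
    rw [Metric.mem_closedBall, dist_zero_right]
    exact Finset.le_sup' _ hv
  have := convexHull_min hsub (convex_closedBall (0 : Fin d → ℝ) R)
  intro x hx
  have hmem := this hx
  rwa [Metric.mem_closedBall, dist_zero_right] at hmem


theorem gorenstein_of_slack_one {d m : ℕ} (P : Set (Fin d → ℝ))
    (V : Finset (Fin d → ℝ)) (hVlat : (V : Set (Fin d → ℝ)) ⊆ latticePoints d)
    (hPeq : P = convexHull ℝ (V : Set (Fin d → ℝ)))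
    (n : Fin m → Fin d → ℤ) (h : Fin m → ℤ)
    (hpres1 : P = {x | ∀ i, pairing (n i) x ≥ -(h i : ℝ)})
    (kz : ℤ) (w : Fin d → ℝ) (hk : 1 ≤ kz) (hw : w ∈ latticePoints d)
    (hslack : ∀ j, pairing (n j) w = 1 - (kz : ℝ) * (h j : ℝ)) : IsGorenstein P := by
  classical
  set k : ℕ := kz.toNat with hkdef
  have hk1 : 1 ≤ k := by omega
  have hkr : ((k : ℕ) : ℝ) = ((kz : ℤ) : ℝ) := by
    rw [hkdef]
    exact_mod_cast congrArg (fun t : ℤ => (t : ℝ)) (Int.toNat_of_nonneg (by omega))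
  have hkpos : (0 : ℝ) < (k : ℝ) := by
    have : (0:ℤ) < kz := by omega
    rw [hkr]; exact_mod_cast this
  set Q : Set (Fin d → ℝ) := (fun x => x - w) '' ((k : ℝ) • P) with hQdef
  have hPm : ∀ x, x ∈ P ↔ ∀ j, pairing (n j) x ≥ -(h j : ℝ) := by
    intro x
    rw [hpres1]
    exact Iff.rfl
  -- Q as an H-polytope with all facet heights 1
  have hQset : ∀ x, x ∈ Q ↔ ∀ j, pairing (n j) x ≥ -1 := by
    intro x
    constructor
    · rintro ⟨y, hy, rfl⟩
      obtain ⟨p, hp, rfl⟩ := Set.mem_smul_set.1 hy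
      intro j
      rw [pairing_sub, pairing_smul, hslack]
      have h1 : pairing (n j) p ≥ -(h j : ℝ) := (hPm p).1 hp j
      have h2 : (k : ℝ) * pairing (n j) p ≥ (k : ℝ) * (-(h j : ℝ)) :=
        mul_le_mul_of_nonneg_left h1 (le_of_lt hkpos)
      rw [hkr] at h2 ⊢
      linarith
    · intro hx
      refine ⟨(k : ℝ) • (((k : ℝ)⁻¹) • (x + w)), ?_, ?_⟩
      · apply Set.smul_mem_smul_set
        rw [hPm]
        intro j
        rw [pairing_smul, pairing_add, hslack]
        have h1 : pairing (n j) x ≥ -1 := hx j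
        have h2 : (k:ℝ)⁻¹ * (pairing (n j) x + (1 - (kz:ℝ) * (h j:ℝ)))
            ≥ (k:ℝ)⁻¹ * (-((kz:ℝ) * (h j : ℝ))) := by
          apply mul_le_mul_of_nonneg_left _ (le_of_lt (inv_pos.2 hkpos))
          linarith
        have h3 : (k:ℝ)⁻¹ * (-((kz:ℝ) * (h j : ℝ))) = -(h j : ℝ) := by
          rw [← hkr]
          field_simp
        linarith [h3 ▸ h2]
      · rw [smul_smul, mul_inv_cancel₀ (ne_of_gt hkpos), one_smul]
        exact add_sub_cancel_right x w
  -- Q is a lattice polytope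
  have hf : ∃ f : (Fin d → ℝ) →ᵃ[ℝ] (Fin d → ℝ), ∀ x, f x = (k : ℝ) • x - w := by
    refine ⟨AffineMap.mk' (fun x => (k : ℝ) • x - w)
      ((k : ℝ) • (LinearMap.id : (Fin d → ℝ) →ₗ[ℝ] (Fin d → ℝ))) 0 ?_, fun x => ?_⟩
    · intro p'
      simp [vsub_eq_sub, vadd_eq_add]
      abel
    · simp [AffineMap.coe_mk']
  obtain ⟨f, hfx⟩ := hf
  have hQim : Q = f '' P := by
    rw [hQdef, ← Set.image_smul, Set.image_image]
    apply Set.image_congr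
    intro x _
    rw [hfx]
  set VQ : Finset (Fin d → ℝ) := V.image (fun v => (k : ℝ) • v - w) with hVQdef
  have hQhull : Q = convexHull ℝ (VQ : Set (Fin d → ℝ)) := by
    rw [hQim, hPeq, AffineMap.image_convexHull]
    congr 1
    rw [hVQdef, Finset.coe_image]
    apply Set.image_congr
    intro x _
    rw [hfx]
  have hVQlat : (VQ : Set (Fin d → ℝ)) ⊆ latticePoints d := by
    intro x hx
    rw [hVQdef, Finset.coe_image] at hx
    obtain ⟨v, hv, rfl⟩ := hx
    have hvl : v ∈ latticePoints d := hVlat hv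
    have h1 : ((kz : ℝ)) • v ∈ latticePoints d := lat_zsmul kz hvl
    rw [← hkr] at h1
    exact lat_sub h1 hw
  -- 0 in the interior of Q
  have hcont : ∀ nv : Fin d → ℤ, Continuous (fun x : Fin d → ℝ => pairing nv x) := by
    intro nv
    unfold pairing
    exact continuous_finset_sum _ fun i _ => continuous_const.mul (continuous_apply i)
  have h0int : (0 : Fin d → ℝ) ∈ interior Q := by
    have hO : IsOpen (⋂ j, {x : Fin d → ℝ | -1 < pairing (n j) x}) :=
      isOpen_iInter_of_finite fun j => isOpen_lt continuous_const (hcont (n j))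
    have hsub : (⋂ j, {x : Fin d → ℝ | -1 < pairing (n j) x}) ⊆ Q := by
      intro x hx
      rw [hQset]
      intro j
      exact le_of_lt (Set.mem_iInter.1 hx j)
    have h0 : (0 : Fin d → ℝ) ∈ ⋂ j, {x : Fin d → ℝ | -1 < pairing (n j) x} := by
      rw [Set.mem_iInter]
      intro j
      rw [Set.mem_setOf_eq, pairing_zero]
      norm_num
    exact interior_maximal hsub hO h0
  -- the polar dual of Q is the lattice polytope conv({0} ∪ {n_j})
  set W : Finset (Fin d → ℝ) :=
    insert (0 : Fin d → ℝ) (Finset.image (fun j => (fun i => ((n j i : ℤ) : ℝ))) Finset.univ)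
    with hWdef
  have hWlat : (W : Set (Fin d → ℝ)) ⊆ latticePoints d := by
    intro y hy
    rw [hWdef] at hy
    simp only [Finset.coe_insert, Set.mem_insert_iff, Finset.coe_image,
      Set.mem_image, Finset.coe_univ] at hy
    rcases hy with rfl | ⟨j, _, rfl⟩
    · exact fun i => ⟨0, by simp⟩
    · exact lat_nvec (n j)
  have hWdual : polarDual Q = convexHull ℝ (W : Set (Fin d → ℝ)) := by
    apply Set.Subset.antisymm
    · intro uu huu
      by_contra hnot
      have hWconv : Convex ℝ (convexHull ℝ (W : Set (Fin d → ℝ))) := convex_convexHull ℝ _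
      have hWcl : IsClosed (convexHull ℝ (W : Set (Fin d → ℝ))) :=
        (W.finite_toSet.isCompact_convexHull ℝ).isClosed
      obtain ⟨f', s, hfu, hfW⟩ := geometric_hahn_banach_point_closed hWconv hWcl hnot
      obtain ⟨g, hg⟩ := clm_repr f'
      have h0W : (0 : Fin d → ℝ) ∈ convexHull ℝ (W : Set (Fin d → ℝ)) :=
        subset_convexHull ℝ _ (by rw [hWdef]; simp)
      have hs0 : s < 0 := by
        have h1 := hfW 0 h0W
        rw [hg, dotP_zero_right] at h1
        linarith
      have hsne : s ≠ 0 := ne_of_lt hs0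
      set cc : ℝ := (-1) / s with hccdef
      have hccpos : 0 < cc := div_pos_of_neg_of_neg (by norm_num) hs0
      set xh : Fin d → ℝ := cc • g with hxhdef
      have hxhQ : xh ∈ Q := by
        rw [hQset]
        intro j
        have hnW : (fun i => ((n j i : ℤ) : ℝ)) ∈ convexHull ℝ (W : Set (Fin d → ℝ)) := by
          apply subset_convexHull
          rw [hWdef]
          simp only [Finset.coe_insert, Set.mem_insert_iff, Finset.coe_image,
            Set.mem_image, Finset.coe_univ]
          exact Or.inr ⟨j, Set.mem_univ j, rfl⟩
        have h1 : s < dotP g (fun i => ((n j i : ℤ) : ℝ)) := by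
          rw [← hg]; exact hfW _ hnW
        have h2 : pairing (n j) xh = cc * pairing (n j) g := pairing_smul _ _ _
        have h3 : pairing (n j) g = dotP g (fun i => ((n j i : ℤ) : ℝ)) := by
          rw [pairing_eq_dotP, dotP_comm]
        have h4 : cc * s < cc * pairing (n j) g := by
          rw [h3]; exact mul_lt_mul_of_pos_left h1 hccpos
        have h5 : cc * s = -1 := by
          rw [hccdef]; exact div_mul_cancel₀ (-1) hsne
        rw [h2]
        linarith
      have h1 : -1 ≤ dotP uu xh := huu xh hxhQ
      have h2 : dotP uu xh < -1 := by
        have ha : dotP uu xh = cc * dotP g uu := by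
          rw [hxhdef, dotP_comm, dotP_smul_left, dotP_comm]
        have hb : dotP g uu < s := by rw [← hg]; exact hfu
        have hc2 : cc * dotP g uu < cc * s := mul_lt_mul_of_pos_left hb hccpos
        have h5 : cc * s = -1 := by rw [hccdef]; exact div_mul_cancel₀ (-1) hsne
        rw [ha]
        linarith
      linarith
    · apply convexHull_min
      · intro y hy
        rw [hWdef] at hy
        simp only [Finset.coe_insert, Set.mem_insert_iff, Finset.coe_image,
          Set.mem_image, Finset.coe_univ] at hy
        rcases hy with rfl | ⟨j, _, rfl⟩
        · intro x _
          show -1 ≤ ∑ i, (0 : Fin d → ℝ) i * x i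
          simp
        · intro x hx
          show -1 ≤ ∑ i, ((n j i : ℤ) : ℝ) * x i
          exact (hQset x).1 hx j
      · exact polarDual_convex Q
  exact ⟨k, w, hk1, hw, ⟨VQ, hVQlat, hQhull⟩, h0int, ⟨W, hWlat, hWdual⟩⟩


theorem backward {d : ℕ} (hd : 1 ≤ d) (P : Set (Fin d → ℝ))
    (hP : IsLatticePolytope P) (hfull : (interior P).Nonempty) :
    IsGorenstein P → NearlyGorenstein P := by
  classical
  intro hGor
  obtain ⟨V, hVlat, hPeq⟩ := hP
  obtain ⟨k, w, hk1, hwlat, hrefl⟩ := hGor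
  obtain ⟨⟨VQ, hVQlat, hQeq⟩, h0int, ⟨V', hV'lat, hdual⟩⟩ := hrefl
  set Q : Set (Fin d → ℝ) := (fun x => x - w) '' ((k : ℝ) • P) with hQdef
  have hVne : V.Nonempty := by
    obtain ⟨x, hx⟩ := hfull
    have hxP : x ∈ P := interior_subset hx
    rw [hPeq] at hxP
    by_contra h
    rw [Finset.not_nonempty_iff_eq_empty] at h
    rw [h] at hxP
    simp at hxP
  have hk0 : ((k : ℝ)) ≠ 0 := Nat.cast_ne_zero.2 (by omega)
  -- membership transfer between P and Q
  have hPQ : ∀ x ∈ P, (k : ℝ) • x - w ∈ Q := by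
    intro x hx
    exact ⟨(k : ℝ) • x, Set.smul_mem_smul_set hx, rfl⟩
  have hQP : ∀ x : Fin d → ℝ, (k : ℝ) • x - w ∈ Q → x ∈ P := by
    intro x hx
    obtain ⟨y, hy, hyx⟩ := hx
    obtain ⟨p, hp, hpy⟩ := Set.mem_smul_set.1 hy
    have h1 : (k : ℝ) • p = (k : ℝ) • x := by
      have := sub_left_inj.1 (hpy ▸ hyx)
      exact this
    have h2 : p = x := smul_right_injective (Fin d → ℝ) hk0 h1
    rwa [← h2]
  have hQconv : Convex ℝ Q := by rw [hQeq]; exact convex_convexHull ℝ _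
  have hQcl : IsClosed Q := by
    rw [hQeq]
    exact (VQ.finite_toSet.isCompact_convexHull ℝ).isClosed
  have h0Q : (0 : Fin d → ℝ) ∈ Q := interior_subset h0int
  -- the support values
  set mf : (Fin d → ℝ) → ℝ := fun v => V.inf' hVne (fun u => dotP v u) with hmfdef
  set hZ : (Fin d → ℝ) → ℤ := fun v => -⌊mf v⌋ with hZdef
  have hmin_attained : ∀ v : Fin d → ℝ, ∃ x₀ ∈ V, mf v = dotP v x₀ := by
    intro v
    obtain ⟨x₀, hx₀, heq⟩ := Finset.exists_mem_eq_inf' hVne (fun u => dotP v u)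
    exact ⟨x₀, hx₀, heq⟩
  have hZcast : ∀ v ∈ latticePoints d, ((hZ v : ℤ) : ℝ) = -(mf v) := by
    intro v hv
    obtain ⟨x₀, hx₀, heq⟩ := hmin_attained v
    have hx₀lat : x₀ ∈ latticePoints d := hVlat hx₀
    have : mf v = ((idot v x₀ : ℤ) : ℝ) := by rw [heq, dotP_eq_idot hv hx₀lat]
    simp only [hZdef, this, Int.floor_intCast]
    push_cast
    ring
  have hZrep : ∀ v ∈ latticePoints d, ∃ x₀ ∈ latticePoints d, hZ v = -(idot v x₀) := by
    intro v hv
    obtain ⟨x₀, hx₀, heq⟩ := hmin_attained v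
    have hx₀lat : x₀ ∈ latticePoints d := hVlat hx₀
    refine ⟨x₀, hx₀lat, ?_⟩
    have : mf v = ((idot v x₀ : ℤ) : ℝ) := by rw [heq, dotP_eq_idot hv hx₀lat]
    simp only [hZdef, this, Int.floor_intCast]
  have hPmin : ∀ (v : Fin d → ℝ), ∀ x ∈ P, mf v ≤ dotP v x := by
    intro v x hx
    rw [hPeq] at hx
    exact hull_min V hVne v x hx
  -- the key fact : k * hZ v + <v, w> = 1 for nonzero dual generators
  have hkey : ∀ v ∈ V', v ≠ 0 →
      (dotP v w = 1 - (k : ℝ) * ((hZ v : ℤ) : ℝ) ∧ (k : ℤ) * hZ v + idot v w = 1) := by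
    intro v hvV' hv0
    have hvlat : v ∈ latticePoints d := hV'lat hvV'
    have hvpol : ∀ x ∈ Q, -1 ≤ dotP v x := by
      have hvmem : v ∈ polarDual Q := by
        rw [hdual]
        exact subset_convexHull ℝ _ hvV'
      intro x hx
      exact hvmem x hx
    -- c := k * hZ v + dotP v w ; show c = 1
    set c : ℝ := (k : ℝ) * ((hZ v : ℤ) : ℝ) + dotP v w with hcdef
    have hcint : c = (((k : ℤ) * hZ v + idot v w : ℤ) : ℝ) := by
      rw [hcdef, dotP_eq_idot hvlat hwlat]
      push_cast
      ring
    -- lower bound on Q values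
    have hQlb : ∀ x ∈ Q, -c ≤ dotP v x := by
      intro x hx
      obtain ⟨y, hy, hyx⟩ := hx
      obtain ⟨p, hp, hpy⟩ := Set.mem_smul_set.1 hy
      have hx' : x = (k : ℝ) • p - w := by rw [← hyx, ← hpy]
      rw [hx', dotP_sub, dotP_smul]
      have h1 : mf v ≤ dotP v p := hPmin v p hp
      have h2 : ((hZ v : ℤ) : ℝ) = -(mf v) := hZcast v hvlat
      have hk0' : (0 : ℝ) ≤ (k : ℝ) := Nat.cast_nonneg k
      nlinarith
    -- c ≤ 1
    have hcle : c ≤ 1 := by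
      obtain ⟨x₀, hx₀, hmfeq⟩ := hmin_attained v
      have hx₀P : x₀ ∈ P := by
        rw [hPeq]
        exact subset_convexHull ℝ _ hx₀
      have hz₀ : (k : ℝ) • x₀ - w ∈ Q := hPQ x₀ hx₀P
      have h1 : -1 ≤ dotP v ((k : ℝ) • x₀ - w) := hvpol _ hz₀
      rw [dotP_sub, dotP_smul] at h1
      have h2 : ((hZ v : ℤ) : ℝ) = -(mf v) := hZcast v hvlat
      nlinarith [hmfeq]
    -- c > 0, via a small negative multiple of v inside Q
    have hcpos : 0 < c := by
      obtain ⟨ε, hε, hball⟩ := Metric.mem_nhds_iff.1 (mem_interior_iff_mem_nhds.1 h0int)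
      set c₁ : ℝ := ε / (2 * (‖v‖ + 1)) with hc₁def
      have hnv : (0:ℝ) < ‖v‖ + 1 := by positivity
      have hc₁pos : 0 < c₁ := by positivity
      set x₁ : Fin d → ℝ := (-c₁) • v with hx₁def
      have hx₁Q : x₁ ∈ Q := by
        apply hball
        rw [Metric.mem_ball, dist_zero_right, hx₁def, norm_smul]
        have h1 : ‖(-c₁ : ℝ)‖ = c₁ := by
          rw [norm_neg, Real.norm_of_nonneg (le_of_lt hc₁pos)]
        rw [h1, hc₁def]
        rw [div_mul_eq_mul_div, div_lt_iff₀ (by positivity)]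
        nlinarith [norm_nonneg v]
      have h1 : dotP v x₁ = -c₁ * dotP v v := by rw [hx₁def, dotP_smul]
      have h2 : dotP v x₁ < 0 := by
        rw [h1]
        have := dotP_self_pos hv0
        nlinarith
      have h3 : -c ≤ dotP v x₁ := hQlb x₁ hx₁Q
      linarith
    -- integrality forces c = 1
    have hceq : c = 1 := by
      set cz : ℤ := (k : ℤ) * hZ v + idot v w with hczdef
      have h1 : (0 : ℝ) < (cz : ℝ) := by rw [← hcint]; exact hcpos
      have h2 : ((cz : ℤ) : ℝ) ≤ 1 := by rw [← hcint]; exact hcle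
      have h3 : 0 < cz := by exact_mod_cast h1
      have h4 : cz ≤ 1 := by exact_mod_cast h2
      have h5 : cz = 1 := by omega
      rw [hcint, h5]
      norm_num
    constructor
    · rw [hcdef] at hceq; linarith
    · have : ((((k : ℤ) * hZ v + idot v w : ℤ)) : ℝ) = ((1 : ℤ) : ℝ) := by
        rw [← hcint, hceq]; norm_num
      exact_mod_cast this
  -- the (possibly redundant) halfspace presentation indexed by nonzero dual generators
  set J : Finset (Fin d → ℝ) := V'.filter (fun v => v ≠ 0) with hJdef
  have hJlat : ∀ v ∈ J, v ∈ latticePoints d := by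
    intro v hv
    exact hV'lat (Finset.mem_coe.2 (Finset.filter_subset _ _ hv))
  set Sint : Finset (Fin d → ℝ) → Set (Fin d → ℝ) :=
    fun T => {x | ∀ v ∈ T, -((hZ v : ℤ) : ℝ) ≤ dotP v x} with hSintdef
  have hSanti : ∀ (T T' : Finset (Fin d → ℝ)), T ⊆ T' → Sint T' ⊆ Sint T :=
    fun T T' h x hx v hv => hx v (h hv)
  have hJP : Sint J = P := by
    apply Set.Subset.antisymm
    · intro x hx
      apply hQP
      apply mem_of_dual hQconv hQcl h0Q V' hdual
      intro v hvV'
      by_cases hv0 : v = 0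
      · rw [hv0, dotP_zero_left]; norm_num
      · have hvJ : v ∈ J := Finset.mem_filter.2 ⟨hvV', hv0⟩
        have h1 : -((hZ v : ℤ) : ℝ) ≤ dotP v x := hx v hvJ
        have h2 : dotP v w = 1 - (k : ℝ) * ((hZ v : ℤ) : ℝ) := (hkey v hvV' hv0).1
        rw [dotP_sub, dotP_smul, h2]
        have hk1' : (1 : ℝ) ≤ (k : ℝ) := by exact_mod_cast hk1
        nlinarith
    · intro x hx v hv
      have hvlat : v ∈ latticePoints d := hJlat v hv
      have h1 : mf v ≤ dotP v x := hPmin v x hx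
      rw [hZcast v hvlat]
      linarith
  -- prune to a minimal (hence irredundant) subfamily
  have h𝒮ne : (J.powerset.filter (fun T => Sint T = P)).Nonempty :=
    ⟨J, Finset.mem_filter.2 ⟨Finset.mem_powerset_self J, hJP⟩⟩
  obtain ⟨T, hTmem, hTmin⟩ :=
    Finset.exists_min_image (J.powerset.filter (fun T => Sint T = P)) Finset.card h𝒮ne
  have hTsub : T ⊆ J := Finset.mem_powerset.1 (Finset.mem_filter.1 hTmem).1
  have hTP : Sint T = P := (Finset.mem_filter.1 hTmem).2
  have hirr : ∀ v ∈ T, ∃ x, dotP v x < -((hZ v : ℤ) : ℝ) ∧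
      ∀ u ∈ T, u ≠ v → -((hZ u : ℤ) : ℝ) ≤ dotP u x := by
    intro v hv
    by_contra hno
    push_neg at hno
    have herase : Sint (T.erase v) = P := by
      apply Set.Subset.antisymm
      · intro x hx
        rw [← hTP]
        intro u hu
        by_cases huv : u = v
        · subst huv
          by_contra hlt
          push_neg at hlt
          obtain ⟨u', hu'T, hu'ne, hu'lt⟩ := hno x hlt
          exact absurd (hx u' (Finset.mem_erase.2 ⟨hu'ne, hu'T⟩)) (not_le.2 hu'lt)
        · exact hx u (Finset.mem_erase.2 ⟨huv, hu⟩)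
      · rw [← hTP]
        exact hSanti _ _ (Finset.erase_subset _ _)
    have hmem' : T.erase v ∈ J.powerset.filter (fun T => Sint T = P) :=
      Finset.mem_filter.2 ⟨Finset.mem_powerset.2 ((Finset.erase_subset _ _).trans hTsub), herase⟩
    have hcard := hTmin _ hmem'
    have hlt : (T.erase v).card < T.card := Finset.card_erase_lt_of_mem hv
    omega
  -- reindex by Fin m
  set m : ℕ := T.card with hmdef
  set e := T.equivFin.symm with hedef
  set nn : Fin m → Fin d → ℤ := fun i => intRep ((e i : { x // x ∈ T }) : Fin d → ℝ) with hnndef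
  set hh : Fin m → ℤ := fun i => hZ ((e i : { x // x ∈ T }) : Fin d → ℝ) with hhhdef
  have heT : ∀ i : Fin m, ((e i : { x // x ∈ T }) : Fin d → ℝ) ∈ T := fun i => (e i).2
  have heJ : ∀ i : Fin m, ((e i : { x // x ∈ T }) : Fin d → ℝ) ∈ J := fun i => hTsub (heT i)
  have helat : ∀ i : Fin m, ((e i : { x // x ∈ T }) : Fin d → ℝ) ∈ latticePoints d :=
    fun i => hJlat _ (heJ i)
  have heV' : ∀ i : Fin m, ((e i : { x // x ∈ T }) : Fin d → ℝ) ∈ V' ∧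
      ((e i : { x // x ∈ T }) : Fin d → ℝ) ≠ 0 := fun i => Finset.mem_filter.1 (heJ i)
  have hesurj : ∀ v ∈ T, ∃ i : Fin m, ((e i : { x // x ∈ T }) : Fin d → ℝ) = v := by
    intro v hv
    exact ⟨T.equivFin ⟨v, hv⟩, by simp [hedef]⟩
  have heinj : ∀ i j : Fin m, i ≠ j →
      ((e i : { x // x ∈ T }) : Fin d → ℝ) ≠ ((e j : { x // x ∈ T }) : Fin d → ℝ) := by
    intro i j hij hcontra
    exact hij (e.injective (Subtype.ext hcontra))
  have hpair : ∀ (i : Fin m) (x : Fin d → ℝ),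
      pairing (nn i) x = dotP ((e i : { x // x ∈ T }) : Fin d → ℝ) x :=
    fun i x => pairing_intRep (helat i) x
  -- the facet presentation
  have hpres1 : P = {x | ∀ i, pairing (nn i) x ≥ -((hh i : ℤ) : ℝ)} := by
    rw [← hTP]
    ext x
    simp only [Set.mem_setOf_eq]
    constructor
    · intro hx i
      have h1 := hx _ (heT i)
      rw [hpair]
      simp only [hhhdef]
      exact h1
    · intro hx v hv
      obtain ⟨i, hi⟩ := hesurj v hv
      have h1 := hx i
      rw [hpair] at h1
      simp only [hhhdef] at h1
      rw [hi] at h1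
      exact h1
  have hpres2 : ∀ i, Finset.univ.gcd (nn i) = 1 := by
    intro i
    set v : Fin d → ℝ := ((e i : { x // x ∈ T }) : Fin d → ℝ) with hvdef
    obtain ⟨hvV', hv0⟩ := heV' i
    have hvlat : v ∈ latticePoints d := helat i
    have hcz : (k : ℤ) * hZ v + idot v w = 1 := (hkey v hvV' hv0).2
    set g : ℤ := Finset.univ.gcd (nn i) with hgdef
    have hgdvd : ∀ j, g ∣ intRep v j := fun j => Finset.gcd_dvd (Finset.mem_univ j)
    have hgw : g ∣ idot v w := Finset.dvd_sum fun j _ => (hgdvd j).mul_right _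
    have hgh : g ∣ hZ v := by
      obtain ⟨x₀, hx₀lat, hx₀eq⟩ := hZrep v hvlat
      rw [hx₀eq]
      exact (Finset.dvd_sum fun j _ => (hgdvd j).mul_right _).neg_right
    have hg1 : g ∣ 1 := by
      rw [← hcz]
      exact dvd_add (hgh.mul_left _) hgw
    have hgu : g = 1 ∨ g = -1 := Int.isUnit_iff.1 (isUnit_of_dvd_one hg1)
    have hgnn : 0 ≤ g := by
      have hnorm := Finset.normalize_gcd (s := (Finset.univ : Finset (Fin d))) (f := nn i)
      rw [← hgdef] at hnorm
      exact Int.nonneg_of_normalize_eq_self hnorm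
    rcases hgu with h | h
    · exact h
    · omega
  have hpres3 : ∀ i, ∃ x : Fin d → ℝ, pairing (nn i) x < -((hh i : ℤ) : ℝ) ∧
      ∀ j, j ≠ i → pairing (nn j) x ≥ -((hh j : ℤ) : ℝ) := by
    intro i
    obtain ⟨x, hx1, hx2⟩ := hirr _ (heT i)
    refine ⟨x, ?_, ?_⟩
    · rw [hpair]; exact hx1
    · intro j hji
      rw [hpair]
      exact hx2 _ (heT j) (heinj j i hji)
  -- NGIncl
  have hNG : NGIncl nn hh := by
    intro p hp
    obtain ⟨⟨hcone, hlat1, z, hz⟩, _⟩ := hp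
    have hsplit : p = ((w, (k : ℝ)) : (Fin d → ℝ) × ℝ) + (p.1 - w, p.2 - (k : ℝ)) := by
      apply Prod.ext <;> simp
    rw [hsplit]
    apply Set.add_mem_add
    · constructor
      · intro i
        have h2 : dotP ((e i : { x // x ∈ T }) : Fin d → ℝ) w
            = 1 - (k : ℝ) * ((hh i : ℤ) : ℝ) := (hkey _ (heV' i).1 (heV' i).2).1
        show pairing (nn i) w > -((k : ℝ) * ((hh i : ℤ) : ℝ))
        rw [hpair, h2]
        linarith
      · exact ⟨hwlat, ⟨(k : ℤ), by push_cast; ring⟩⟩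
    · constructor
      · intro i
        have h2 : dotP ((e i : { x // x ∈ T }) : Fin d → ℝ) w
            = 1 - (k : ℝ) * ((hh i : ℤ) : ℝ) := (hkey _ (heV' i).1 (heV' i).2).1
        have h3 : pairing (nn i) p.1 ≥ -(p.2 * ((hh i : ℤ) : ℝ)) := hcone i
        show pairing (nn i) (p.1 - w) ≥ -((p.2 - (k : ℝ)) * ((hh i : ℤ) : ℝ)) - 1
        rw [hpair, dotP_sub, h2, ← hpair]
        nlinarith [h3]
      · exact ⟨lat_sub hlat1 hwlat, ⟨z - (k : ℤ), by push_cast; rw [← hz]⟩⟩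
  exact ⟨m, nn, hh, ⟨hpres1, hpres2, hpres3⟩, hNG⟩

theorem forward {d : ℕ} (hd : 1 ≤ d) (P : Set (Fin d → ℝ))
    (hP : IsLatticePolytope P) (hfull : (interior P).Nonempty)
    (hind : IsIndecomposable P) : NearlyGorenstein P → IsGorenstein P := by
  classical
  intro hNG
  obtain ⟨m, n, h, ⟨hpres1, hpres2, hpres3⟩, hIncl⟩ := hNG
  obtain ⟨V, hVlat, hPeq⟩ := hP
  have hVne : V.Nonempty := by
    obtain ⟨x, hx⟩ := hfull
    have hxP : x ∈ P := interior_subset hx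
    rw [hPeq] at hxP
    by_contra hc
    rw [Finset.not_nonempty_iff_eq_empty] at hc
    rw [hc] at hxP
    simp at hxP
  have hPm : ∀ x, x ∈ P ↔ ∀ j, pairing (n j) x ≥ -(h j : ℝ) := by
    intro x
    rw [hpres1]
    exact Iff.rfl
  -- boundedness of P
  set R : ℝ := max (V.sup' hVne (fun v => ‖v‖)) 0 with hRdef
  have hR0 : 0 ≤ R := le_max_right _ _
  have hRbnd : ∀ x ∈ P, ‖x‖ ≤ R := by
    intro x hx
    rw [hPeq] at hx
    exact le_trans (hull_norm_bound V hVne x hx) (le_max_left _ _)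
  -- a point of P
  have hVne2 := hVne
  obtain ⟨v₀, hv₀⟩ := hVne2
  have hv₀P : v₀ ∈ P := by rw [hPeq]; exact subset_convexHull ℝ _ hv₀
  -- m ≥ 1
  have hm1 : 0 < m := by
    by_contra hm
    push_neg at hm
    interval_cases m
    have hPuniv : ∀ x : Fin d → ℝ, x ∈ P := by
      intro x
      rw [hPm]
      intro j
      exact absurd j.2 (by omega)
    have i₀ : Fin d := ⟨0, by omega⟩
    set xbig : Fin d → ℝ := fun _ => R + 1 with hxbig
    have h1 : ‖xbig‖ ≤ R := hRbnd xbig (hPuniv xbig)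
    have h2 : ‖xbig i₀‖ ≤ ‖xbig‖ := norm_le_pi_norm xbig i₀
    rw [hxbig] at h2
    simp only [Real.norm_eq_abs] at h2
    rw [abs_of_nonneg (by linarith)] at h2
    linarith
  -- a ray inside P contradicts boundedness
  have hray : ∀ u : Fin d → ℝ, u ≠ 0 → (∀ s : ℝ, 0 ≤ s → v₀ + s • u ∈ P) → False := by
    intro u hu hsP
    have hun : 0 < ‖u‖ := norm_pos_iff.2 hu
    set s : ℝ := (R + ‖v₀‖ + 1) / ‖u‖ with hsdef
    have hs0 : 0 ≤ s := by positivity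
    have h1 : ‖v₀ + s • u‖ ≤ R := hRbnd _ (hsP s hs0)
    have h2 : ‖s • u‖ ≤ ‖v₀ + s • u‖ + ‖v₀‖ := by
      calc ‖s • u‖ = ‖(v₀ + s • u) - v₀‖ := by congr 1; abel
        _ ≤ ‖v₀ + s • u‖ + ‖v₀‖ := norm_sub_le _ _
    have h3 : ‖s • u‖ = s * ‖u‖ := by
      rw [norm_smul, Real.norm_of_nonneg hs0]
    have h4 : s * ‖u‖ = R + ‖v₀‖ + 1 := by
      rw [hsdef]
      field_simp
    nlinarith [norm_nonneg v₀]
  -- lattice points with all pairings nonnegative vanish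
  have hzero : ∀ x : Fin d → ℝ, (∀ j, 0 ≤ pairing (n j) x) → x = 0 := by
    intro x hx
    by_contra hx0
    apply hray x hx0
    intro s hs
    rw [hPm]
    intro j
    rw [pairing_add, pairing_smul]
    have h1 : pairing (n j) v₀ ≥ -(h j : ℝ) := (hPm v₀).1 hv₀P j
    nlinarith [hx j]
  -- levels of interior lattice points are positive
  have hlevpos : ∀ (y : Fin d → ℝ) (b : ℤ),
      (∀ j, pairing (n j) y > -((b : ℝ) * (h j : ℝ))) → 1 ≤ b := by
    intro y b hy
    by_contra hb
    push_neg at hb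
    have hb0 : b ≤ 0 := by omega
    have hbr : ((b : ℤ) : ℝ) ≤ 0 := by exact_mod_cast hb0
    set u : Fin d → ℝ := y - ((b : ℝ)) • v₀ with hudef
    have hu0 : u ≠ 0 := by
      intro hc
      have hyv : y = ((b : ℝ)) • v₀ := by
        have := sub_eq_zero.1 hc
        exact this
      have h1 := hy ⟨0, hm1⟩
      rw [hyv, pairing_smul] at h1
      have h2 : pairing (n ⟨0, hm1⟩) v₀ ≥ -(h ⟨0, hm1⟩ : ℝ) := (hPm v₀).1 hv₀P _
      nlinarith
    apply hray u hu0
    intro s hs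
    rw [hPm]
    intro j
    rw [pairing_add, pairing_smul, hudef, pairing_sub, pairing_smul]
    have h1 : pairing (n j) v₀ ≥ -(h j : ℝ) := (hPm v₀).1 hv₀P j
    have h2 := hy j
    have hpos : 0 ≤ pairing (n j) y - (b : ℝ) * pairing (n j) v₀ := by
      nlinarith [mul_nonneg (neg_nonneg.2 hbr) (by linarith : (0:ℝ) ≤ pairing (n j) v₀ + (h j : ℝ))]
    have hprod : 0 ≤ s * (pairing (n j) y - (b : ℝ) * pairing (n j) v₀) := mul_nonneg hs hpos
    linarith
  -- each facet contains a lattice point of V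
  have hfacet : ∀ j, ∃ v ∈ V, pairing (n j) v = -(h j : ℝ) := by
    intro j
    obtain ⟨x, hx1, hx2⟩ := hpres3 j
    set A : ℝ := pairing (n j) v₀ + (h j : ℝ) with hAdef
    set B : ℝ := -(h j : ℝ) - pairing (n j) x with hBdef
    have hA0 : 0 ≤ A := by
      have := (hPm v₀).1 hv₀P j
      rw [hAdef]
      linarith
    have hB0 : 0 < B := by rw [hBdef]; linarith
    set lam : ℝ := A / (A + B) with hlamdef
    have hlam0 : 0 ≤ lam := by positivity
    have hlam1 : lam ≤ 1 := by
      rw [hlamdef, div_le_one (by linarith)]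
      linarith
    set xc : Fin d → ℝ := (1 - lam) • v₀ + lam • x with hxcdef
    have hxcj : pairing (n j) xc = -(h j : ℝ) := by
      rw [hxcdef, pairing_add, pairing_smul, pairing_smul]
      have hAB : A + B ≠ 0 := by linarith
      rw [hlamdef]
      field_simp
      rw [hAdef, hBdef]
      ring
    have hxcP : xc ∈ P := by
      rw [hPm]
      intro l
      by_cases hlj : l = j
      · rw [hlj, hxcj]
      · rw [hxcdef, pairing_add, pairing_smul, pairing_smul]
        have h1 : pairing (n l) v₀ ≥ -(h l : ℝ) := (hPm v₀).1 hv₀P l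
        have h2 : pairing (n l) x ≥ -(h l : ℝ) := hx2 l hlj
        nlinarith
    -- the minimum of pairing (n j) over V is attained and is ≤ -(h j)
    obtain ⟨vm, hvmV, hvm⟩ := Finset.exists_mem_eq_inf' hVne (fun u => pairing (n j) u)
    have hmin_le : V.inf' hVne (fun u => pairing (n j) u) ≤ -(h j : ℝ) := by
      have hle : ∀ u, pairing (n j) u = dotP (fun i => ((n j i : ℤ) : ℝ)) u :=
        fun u => pairing_eq_dotP _ _
      have h1 := hull_min V hVne (fun i => ((n j i : ℤ) : ℝ)) xc (hPeq ▸ hxcP)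
      calc V.inf' hVne (fun u => pairing (n j) u)
          = V.inf' hVne (fun u => dotP (fun i => ((n j i : ℤ) : ℝ)) u) := by
            apply Finset.inf'_congr _ rfl
            intro u _
            exact hle u
        _ ≤ dotP (fun i => ((n j i : ℤ) : ℝ)) xc := h1
        _ = pairing (n j) xc := (hle xc).symm
        _ = -(h j : ℝ) := hxcj
    have hvmP : vm ∈ P := by rw [hPeq]; exact subset_convexHull ℝ _ hvmV
    have hge : pairing (n j) vm ≥ -(h j : ℝ) := (hPm vm).1 hvmP j
    refine ⟨vm, hvmV, le_antisymm ?_ hge⟩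
    rw [hvm] at hmin_le
    exact hmin_le
  -- the common Gorenstein-construction step
  have hfinal : ∀ (kz : ℤ) (w : Fin d → ℝ), 1 ≤ kz → w ∈ latticePoints d →
      (∀ j, pairing (n j) w = 1 - (kz : ℝ) * (h j : ℝ)) → IsGorenstein P :=
    fun kz w hk hw hs => gorenstein_of_slack_one P V hVlat hPeq n h hpres1 kz w hk hw hs
  -- NG decompositions of the generators
  have hdec : ∀ v : {x // x ∈ V}, ∃ (y z : Fin d → ℝ) (b : ℤ),
      y ∈ latticePoints d ∧ z ∈ latticePoints d ∧ (v : Fin d → ℝ) = y + z ∧ 1 ≤ b ∧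
      (∀ j, pairing (n j) y ≥ 1 - (b : ℝ) * (h j : ℝ)) ∧
      (∀ j, pairing (n j) z ≥ ((b : ℝ) - 1) * (h j : ℝ) - 1) := by
    intro v
    have hvP : (v : Fin d → ℝ) ∈ P := by rw [hPeq]; exact subset_convexHull ℝ _ v.2
    have hvlat : (v : Fin d → ℝ) ∈ latticePoints d := hVlat v.2
    have hmem : ((v : Fin d → ℝ), (1 : ℝ)) ∈
        (coneOver n h ∩ latticePairs d) \ {(0 : (Fin d → ℝ) × ℝ)} := by
      refine ⟨⟨?_, ⟨hvlat, ⟨1, by norm_num⟩⟩⟩, ?_⟩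
      · intro i
        have := (hPm _).1 hvP i
        show pairing (n i) (v : Fin d → ℝ) ≥ -((1 : ℝ) * (h i : ℝ))
        rw [one_mul]
        exact this
      · simp only [Set.mem_singleton_iff, Prod.mk_eq_zero, not_and]
        intro _
        norm_num
    obtain ⟨p₁, hp₁, p₂, hp₂, hsum12⟩ := Set.mem_add.1 (hIncl hmem)
    obtain ⟨bz, hbz⟩ := hp₁.2.2
    have hfst : p₁.1 + p₂.1 = (v : Fin d → ℝ) := congrArg Prod.fst hsum12
    have hsnd : p₁.2 + p₂.2 = 1 := congrArg Prod.snd hsum12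
    have hp2snd : p₂.2 = 1 - (bz : ℝ) := by rw [← hsnd, hbz]; ring
    -- level positivity
    have hb1 : 1 ≤ bz := by
      apply hlevpos p₁.1 bz
      intro j
      have := hp₁.1 j
      rwa [hbz] at this
    -- integrality rounding on the interior part
    have hyge : ∀ j, pairing (n j) p₁.1 ≥ 1 - (bz : ℝ) * (h j : ℝ) := by
      intro j
      obtain ⟨zz, hzz⟩ := pairing_int hp₁.2.1 (n j)
      have hstrict : pairing (n j) p₁.1 > -((bz : ℝ) * (h j : ℝ)) := by
        have := hp₁.1 j
        rwa [hbz] at this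
      rw [hzz] at hstrict ⊢
      have h1 : ((-(bz * h j) : ℤ) : ℝ) < (zz : ℝ) := by push_cast; linarith
      have h2 : -(bz * h j) < zz := by exact_mod_cast h1
      have h3 : 1 - bz * h j ≤ zz := by omega
      have h4 : ((1 - bz * h j : ℤ) : ℝ) ≤ (zz : ℝ) := by exact_mod_cast h3
      push_cast at h4
      linarith
    refine ⟨p₁.1, p₂.1, bz, hp₁.2.1, hp₂.2.1, hfst.symm, hb1, hyge, ?_⟩
    intro j
    have := hp₂.1 j
    rw [hp2snd] at this
    have heq : -((1 - (bz : ℝ)) * (h j : ℝ)) - 1 = ((bz : ℝ) - 1) * (h j : ℝ) - 1 := by ring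
    linarith [heq ▸ this]
  choose yf zf bf hylat hzlat hsumf hbf1 hyge hzge using hdec
  -- dichotomy on the levels
  by_cases hsame : ∀ v u : {x // x ∈ V}, bf v = bf u
  · -- common level b0 : Minkowski decomposition P = conv A1 + conv A2
    set v₀' : {x // x ∈ V} := ⟨v₀, hv₀⟩ with hv₀'def
    set b0 : ℤ := bf v₀' with hb0def
    have hb01 : 1 ≤ b0 := hbf1 v₀'
    have hyge' : ∀ (v : {x // x ∈ V}) j,
        pairing (n j) (yf v) ≥ 1 - (b0 : ℝ) * (h j : ℝ) := by
      intro v j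
      have := hyge v j
      rwa [hsame v v₀'] at this
    have hzge' : ∀ (v : {x // x ∈ V}) j,
        pairing (n j) (zf v) ≥ ((b0 : ℝ) - 1) * (h j : ℝ) - 1 := by
      intro v j
      have := hzge v j
      rwa [hsame v v₀'] at this
    set A1 : Finset (Fin d → ℝ) := V.attach.image yf with hA1def
    set A2 : Finset (Fin d → ℝ) := V.attach.image zf with hA2def
    have hA1lat : (A1 : Set (Fin d → ℝ)) ⊆ latticePoints d := by
      intro x hx
      rw [hA1def, Finset.coe_image] at hx
      obtain ⟨v, _, rfl⟩ := hx
      exact hylat v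
    have hA2lat : (A2 : Set (Fin d → ℝ)) ⊆ latticePoints d := by
      intro x hx
      rw [hA2def, Finset.coe_image] at hx
      obtain ⟨v, _, rfl⟩ := hx
      exact hzlat v
    have hPsum : P = convexHull ℝ (A1 : Set (Fin d → ℝ)) + convexHull ℝ (A2 : Set (Fin d → ℝ)) := by
      apply Set.Subset.antisymm
      · rw [hPeq]
        apply convexHull_min
        · intro v hv
          have hv' : v ∈ V := hv
          have h1 : yf ⟨v, hv'⟩ ∈ convexHull ℝ (A1 : Set (Fin d → ℝ)) := by
            apply subset_convexHull
            rw [hA1def, Finset.coe_image]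
            exact ⟨⟨v, hv'⟩, by simp, rfl⟩
          have h2 : zf ⟨v, hv'⟩ ∈ convexHull ℝ (A2 : Set (Fin d → ℝ)) := by
            apply subset_convexHull
            rw [hA2def, Finset.coe_image]
            exact ⟨⟨v, hv'⟩, by simp, rfl⟩
          have h3 := Set.add_mem_add h1 h2
          rw [← hsumf ⟨v, hv'⟩] at h3
          exact h3
        · exact (convex_convexHull ℝ _).add (convex_convexHull ℝ _)
      · intro x hx
        obtain ⟨x₁, hx₁, x₂, hx₂, rfl⟩ := Set.mem_add.1 hx
        rw [hPm]
        intro j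
        have h1 : 1 - (b0 : ℝ) * (h j : ℝ) ≤ dotP (fun i => ((n j i : ℤ) : ℝ)) x₁ := by
          apply hull_halfspace _ _ x₁ hx₁
          intro u hu
          rw [hA1def, Finset.coe_image] at hu
          obtain ⟨v, _, rfl⟩ := hu
          rw [← pairing_eq_dotP]
          exact hyge' v j
        have h2 : ((b0 : ℝ) - 1) * (h j : ℝ) - 1 ≤ dotP (fun i => ((n j i : ℤ) : ℝ)) x₂ := by
          apply hull_halfspace _ _ x₂ hx₂
          intro u hu
          rw [hA2def, Finset.coe_image] at hu
          obtain ⟨v, _, rfl⟩ := hu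
          rw [← pairing_eq_dotP]
          exact hzge' v j
        rw [pairing_add, pairing_eq_dotP, pairing_eq_dotP]
        nlinarith
    have hcases := hind.2 _ _ ⟨A1, hA1lat, rfl⟩ ⟨A2, hA2lat, rfl⟩ hPsum
    -- forced equalities on each facet
    have hforce : ∀ j, ∃ v : {x // x ∈ V},
        pairing (n j) (yf v) = 1 - (b0 : ℝ) * (h j : ℝ) ∧
        pairing (n j) (zf v) = ((b0 : ℝ) - 1) * (h j : ℝ) - 1 := by
      intro j
      obtain ⟨vj, hvjV, hvjeq⟩ := hfacet j
      refine ⟨⟨vj, hvjV⟩, ?_⟩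
      have hsv : vj = yf ⟨vj, hvjV⟩ + zf ⟨vj, hvjV⟩ := hsumf ⟨vj, hvjV⟩
      have h1 : pairing (n j) vj = pairing (n j) (yf ⟨vj, hvjV⟩) + pairing (n j) (zf ⟨vj, hvjV⟩) := by
        have := congrArg (pairing (n j)) hsv
        rwa [pairing_add] at this
      have h2 := hyge' ⟨vj, hvjV⟩ j
      have h3 := hzge' ⟨vj, hvjV⟩ j
      constructor <;> [skip; skip] <;> rw [hvjeq] at h1 <;> linarith
    rcases hcases with ⟨y, hy⟩ | ⟨z, hz⟩
    · -- conv A1 is a point y : all yf v = y and y is the Gorenstein point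
      have hyeq : ∀ v : {x // x ∈ V}, yf v = y := by
        intro v
        have h1 : yf v ∈ convexHull ℝ (A1 : Set (Fin d → ℝ)) := by
          apply subset_convexHull
          rw [hA1def, Finset.coe_image]
          exact ⟨v, by simp, rfl⟩
        rw [hy] at h1
        exact h1
      apply hfinal b0 y hb01
      · rw [← hyeq v₀']
        exact hylat v₀'
      · intro j
        obtain ⟨v, hv1, _⟩ := hforce j
        rw [← hyeq v]
        exact hv1
    · -- conv A2 is a point z
      have hzeq : ∀ v : {x // x ∈ V}, zf v = z := by
        intro v
        have h1 : zf v ∈ convexHull ℝ (A2 : Set (Fin d → ℝ)) := by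
          apply subset_convexHull
          rw [hA2def, Finset.coe_image]
          exact ⟨v, by simp, rfl⟩
        rw [hz] at h1
        exact h1
      have hzslack : ∀ j, pairing (n j) z = ((b0 : ℝ) - 1) * (h j : ℝ) - 1 := by
        intro j
        obtain ⟨v, _, hv2⟩ := hforce j
        rw [← hzeq v]
        exact hv2
      by_cases hb2 : 2 ≤ b0
      · apply hfinal (b0 - 1) (-z) (by omega)
        · rw [← hzeq v₀']
          exact lat_neg (hzlat v₀')
        · intro j
          rw [pairing_neg, hzslack j]
          push_cast
          ring
      · -- b0 = 1 : contradiction with boundedness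
        exfalso
        have hb0eq : b0 = 1 := by omega
        set j₀ : Fin m := ⟨0, hm1⟩ with hj₀def
        have hz1 : pairing (n j₀) z = -1 := by
          rw [hzslack j₀, hb0eq]
          norm_num
        obtain ⟨vm, hvmV, hvmsup⟩ := Finset.exists_mem_eq_sup' hVne (fun u => pairing (n j₀) u)
        set vm' : {x // x ∈ V} := ⟨vm, hvmV⟩ with hvm'def
        have hyvm : yf vm' = vm - z := by
          have h1 := hsumf vm'
          rw [hzeq vm'] at h1
          have : (vm' : Fin d → ℝ) = vm := rfl
          rw [this] at h1
          rw [h1]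
          abel
        have hyvmP : yf vm' ∈ P := by
          rw [hPm]
          intro j
          have h1 := hyge' vm' j
          rw [hb0eq] at h1
          push_cast at h1
          linarith
        have hmax : ∀ x ∈ P, pairing (n j₀) x ≤ V.sup' hVne (fun u => pairing (n j₀) u) := by
          intro x hx
          rw [hPeq] at hx
          have h1 : ∀ u, pairing (n j₀) u = dotP (fun i => ((n j₀ i : ℤ) : ℝ)) u :=
            fun u => pairing_eq_dotP _ _
          calc pairing (n j₀) x = dotP (fun i => ((n j₀ i : ℤ) : ℝ)) x := h1 x
            _ ≤ V.sup' hVne (fun u => pairing (n j₀) u) := by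
                apply hull_halfspace_le _ _ x hx
                intro u hu
                rw [← h1 u]
                exact Finset.le_sup' _ hu
        have h1 := hmax (yf vm') hyvmP
        rw [hyvm, pairing_sub, hz1, ← hvmsup] at h1
        linarith
  · -- two distinct levels give Gorenstein directly
    have key : ∀ v u : {x // x ∈ V}, bf v < bf u → IsGorenstein P := by
      intro v u hlt
      set c : ℤ := bf u - 1 with hcdef
      have hcb : bf v ≤ c := by omega
      have hc1 : 1 ≤ c := le_trans (hbf1 v) hcb
      set t : ℤ := c - bf v with htdef
      have ht0 : 0 ≤ t := by omega
      have htr : (0 : ℝ) ≤ (t : ℝ) := by exact_mod_cast ht0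
      set ystar : Fin d → ℝ := yf v + ((t : ℝ)) • (v : Fin d → ℝ) with hystardef
      have hyslat : ystar ∈ latticePoints d := lat_add (hylat v) (lat_zsmul t (hVlat v.2))
      have hvP : (v : Fin d → ℝ) ∈ P := by rw [hPeq]; exact subset_convexHull ℝ _ v.2
      have hysge : ∀ j, pairing (n j) ystar ≥ 1 - (c : ℝ) * (h j : ℝ) := by
        intro j
        rw [hystardef, pairing_add, pairing_smul]
        have h1 := hyge v j
        have h2 : pairing (n j) (v : Fin d → ℝ) ≥ -(h j : ℝ) := (hPm _).1 hvP j
        have h3 : ((c : ℝ)) = ((bf v : ℝ)) + (t : ℝ) := by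
          rw [htdef]; push_cast; ring
        have hp : 0 ≤ (t : ℝ) * (pairing (n j) (v : Fin d → ℝ) + (h j : ℝ)) :=
          mul_nonneg htr (by linarith)
        rw [h3]
        nlinarith [hp]
      set xstar : Fin d → ℝ := ystar + zf u with hxstardef
      have hxge : ∀ j, 0 ≤ pairing (n j) xstar := by
        intro j
        rw [hxstardef, pairing_add]
        have h1 := hysge j
        have h2 := hzge u j
        have h3 : ((bf u : ℝ)) - 1 = (c : ℝ) := by rw [hcdef]; push_cast; ring
        rw [h3] at h2
        linarith
      have hx0 : xstar = 0 := hzero _ hxge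
      have heq : ∀ j, pairing (n j) ystar = 1 - (c : ℝ) * (h j : ℝ) := by
        intro j
        have h0 : pairing (n j) ystar + pairing (n j) (zf u) = 0 := by
          rw [← pairing_add, ← hxstardef, hx0, pairing_zero]
        have h1 := hysge j
        have h2 := hzge u j
        have h3 : ((bf u : ℝ)) - 1 = (c : ℝ) := by rw [hcdef]; push_cast; ring
        rw [h3] at h2
        linarith
      exact hfinal c ystar hc1 hyslat heq
    push_neg at hsame
    obtain ⟨v, u, hvu⟩ := hsame
    rcases hvu.lt_or_gt with hlt | hgt
    · exact key v u hlt
    · exact key u v hgt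


end Stmt14Aux

theorem stmt_14 {d : ℕ} (hd : 1 ≤ d) (P : Set (Fin d → ℝ))
    (hP : IsLatticePolytope P) (hfull : (interior P).Nonempty)
    (hind : IsIndecomposable P) :
    NearlyGorenstein P ↔ IsGorenstein P :=
  ⟨Stmt14Aux.forward hd P hP hfull hind, Stmt14Aux.backward hd P hP hfull⟩
end
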